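/- arXiv:1503.08546 — 4 statements merged into one kernel-verified Lean document; each statement's English description precedes it below -/
import Mathlib

section
/- Exactness of the variational complex: (i) the kernel of ∂_x on A consists exactly of the constant polynomials ℝ·1; (ii) if f ∈ A has zero constant term and δf = 0, then there exists g ∈ A with f = ∂_x g. -/
open MvPolynomial

/-- The derivation `∂ₓ = Σ_{k≥0} u_{k+1} ∂/∂u_k` on `A = ℝ[u₀, u₁, …]`
(the sum is finite on each polynomial). -/
noncomputable def dx (f : MvPolynomial ℕ ℝ) : MvPolynomial ℕ ℝ :=
  ∑ᶠ k : ℕ, X (k + 1) * pderiv k f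

/-- The variational derivative `δ = Σ_{k≥0} (−1)^k ∂ₓ^k ∘ (∂/∂u_k)`
(the sum is finite on each polynomial). -/
noncomputable def delta (f : MvPolynomial ℕ ℝ) : MvPolynomial ℕ ℝ :=
  ∑ᶠ k : ℕ, ((-1 : ℝ) ^ k) • (dx^[k] (pderiv k f))

noncomputable def DxD : Derivation ℝ (MvPolynomial ℕ ℝ) (MvPolynomial ℕ ℝ) :=
  mkDerivation ℝ (fun k => X (k + 1))

noncomputable def DxL : MvPolynomial ℕ ℝ →ₗ[ℝ] MvPolynomial ℕ ℝ := DxD.toLinearMap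

lemma DxD_monomial (u : ℕ →₀ ℕ) (r : ℝ) :
    DxD (monomial u r) = ∑ k ∈ u.support, X (k+1) * pderiv k (monomial u r) := by
  rw [DxD, mkDerivation_monomial, Finsupp.sum, Finset.smul_sum]
  refine Finset.sum_congr rfl fun k hk => ?_
  rw [pderiv_monomial, smul_eq_mul, ← smul_mul_assoc, smul_monomial, mul_comm]
  norm_num

lemma support_subset_vars {f : MvPolynomial ℕ ℝ} {u : ℕ →₀ ℕ} (hu : u ∈ f.support) :
    (u.support : Set ℕ) ⊆ ↑f.vars := fun k hk => (mem_vars k).2 ⟨u, hu, hk⟩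

lemma DxD_eq_sum {s : Finset ℕ} {f : MvPolynomial ℕ ℝ} (hs : f.vars ⊆ s) :
    DxD f = ∑ k ∈ s, X (k+1) * pderiv k f := by
  conv_lhs => rw [f.as_sum]
  rw [map_sum]
  have h : ∀ u ∈ f.support, DxD (monomial u (coeff u f)) =
      ∑ k ∈ s, X (k+1) * pderiv k (monomial u (coeff u f)) := by
    intro u hu
    rw [DxD_monomial]
    apply Finset.sum_subset
    · intro k hk; exact hs ((mem_vars k).2 ⟨u, hu, hk⟩)
    · intro k _ hk
      rw [Finsupp.notMem_support_iff] at hk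
      rw [pderiv_monomial, hk]
      simp
  rw [Finset.sum_congr rfl h, Finset.sum_comm]
  refine Finset.sum_congr rfl fun k _ => ?_
  rw [← Finset.mul_sum, ← map_sum, ← f.as_sum]

lemma dx_eq_sum {s : Finset ℕ} {f : MvPolynomial ℕ ℝ} (hs : f.vars ⊆ s) :
    dx f = ∑ k ∈ s, X (k+1) * pderiv k f := by
  apply finsum_eq_finset_sum_of_support_subset
  intro k hk
  by_contra hks
  apply hk
  have h2 : k ∉ f.vars := fun h => hks (hs h)
  show X (k + 1) * pderiv k f = 0
  rw [pderiv_eq_zero_of_notMem_vars h2, mul_zero]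

lemma dx_eq : dx = ⇑DxD := by
  funext f
  rw [dx_eq_sum (subset_refl f.vars), DxD_eq_sum (subset_refl f.vars)]

lemma dx_iter (k : ℕ) (f : MvPolynomial ℕ ℝ) : dx^[k] f = (DxL ^ k) f := by
  rw [Module.End.pow_apply, dx_eq]; rfl

lemma DxD_X (k : ℕ) : DxD (X k) = X (k + 1) := by
  rw [DxD]; exact mkDerivation_X ℝ (fun k => X (k+1)) k

-- delta as finite sum

lemma delta_eq_sum {s : Finset ℕ} {f : MvPolynomial ℕ ℝ} (hs : f.vars ⊆ s) :
    delta f = ∑ k ∈ s, ((-1 : ℝ) ^ k) • ((DxL ^ k) (pderiv k f)) := by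
  rw [delta]
  have h : (fun k => ((-1 : ℝ) ^ k) • (dx^[k] (pderiv k f)))
      = fun k => ((-1 : ℝ) ^ k) • ((DxL ^ k) (pderiv k f)) := funext fun k => by rw [dx_iter]
  rw [h]
  apply finsum_eq_finset_sum_of_support_subset
  intro k hk
  by_contra hks
  apply hk
  have h2 : k ∉ f.vars := fun hh => hks (hs hh)
  show ((-1 : ℝ) ^ k) • ((DxL ^ k) (pderiv k f)) = 0
  rw [pderiv_eq_zero_of_notMem_vars h2, map_zero, smul_zero]

-- commutation of partial derivatives
lemma pderiv_comm (i j : ℕ) (f : MvPolynomial ℕ ℝ) :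
    pderiv i (pderiv j f) = pderiv j (pderiv i f) := by
  induction f using MvPolynomial.induction_on' with
  | monomial u r =>
    rcases eq_or_ne i j with rfl | hij
    · rfl
    · simp only [pderiv_monomial]
      have hexp : u - Finsupp.single j 1 - Finsupp.single i 1
          = u - Finsupp.single i 1 - Finsupp.single j 1 := by
        ext a
        simp only [Finsupp.tsub_apply, Finsupp.single_apply]
        split_ifs <;> omega
      rw [hexp, Finsupp.tsub_apply, Finsupp.tsub_apply,
        Finsupp.single_eq_of_ne' hij, Finsupp.single_eq_of_ne' (Ne.symm hij)]
      push_cast [Nat.sub_zero]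
      ring_nf
  | add p q hp hq => simp [map_add, hp, hq]

-- char-zero: a variable in vars has nonzero partial derivative
lemma pderiv_ne_zero_of_mem_vars {f : MvPolynomial ℕ ℝ} {n : ℕ} (h : n ∈ f.vars) :
    pderiv n f ≠ 0 := by
  obtain ⟨d0, hd0, hnd0⟩ := (mem_vars n).1 h
  obtain ⟨d, hd, hdm⟩ := Finset.exists_mem_eq_sup f.support ⟨d0, hd0⟩ (fun u => u n)
  have hdn : 1 ≤ d n := by
    have h1 : d0 n ≤ f.support.sup (fun u => u n) := Finset.le_sup (f := fun u => u n) hd0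
    have h2 : 1 ≤ d0 n := Nat.one_le_iff_ne_zero.2 (Finsupp.mem_support_iff.1 hnd0)
    omega
  intro H
  have hco : coeff (d - Finsupp.single n 1) (pderiv n f) = coeff d f * (d n : ℝ) := by
    conv_lhs => rw [f.as_sum, map_sum]
    rw [coeff_sum]
    simp only [pderiv_monomial, coeff_monomial]
    rw [Finset.sum_eq_single_of_mem d hd]
    · rw [if_pos rfl]
    · intro u hu hune
      rcases Nat.eq_zero_or_pos (u n) with h0 | h1
      · split_ifs <;> simp [h0]
      · rw [if_neg]
        intro heq
        apply hune
        have hun : u n ≤ d n := hdm ▸ Finset.le_sup (f := fun u => u n) hu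
        ext a
        have := DFunLike.congr_fun heq a
        rw [Finsupp.tsub_apply, Finsupp.tsub_apply] at this
        rcases eq_or_ne n a with rfl | hna
        · rw [Finsupp.single_eq_same] at this
          omega
        · rw [Finsupp.single_eq_of_ne' hna] at this
          omega
  rw [H, coeff_zero] at hco
  have h1 : coeff d f ≠ 0 := mem_support_iff.1 hd
  have h2 : (d n : ℝ) ≠ 0 := Nat.cast_ne_zero.2 (by omega)
  exact (mul_ne_zero h1 h2) hco.symm

lemma ker_dx (f : MvPolynomial ℕ ℝ) : dx f = 0 ↔ ∃ c : ℝ, f = C c := by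
  constructor
  · intro H
    by_cases hv : f.vars = ∅
    · refine ⟨coeff 0 f, ?_⟩
      have hsupp : ∀ u ∈ f.support, u = (0 : ℕ →₀ ℕ) := by
        intro u hu
        have : u.support = ∅ := by
          apply Finset.eq_empty_iff_forall_notMem.2
          intro a ha
          have : a ∈ f.vars := (mem_vars a).2 ⟨u, hu, ha⟩
          simp [hv] at this
        exact Finsupp.support_eq_empty.1 this
      ext d
      rw [coeff_C]
      split_ifs with h
      · rw [← h]
      · by_contra hc
        have hd : d ∈ f.support := mem_support_iff.2 hc
        exact h ((hsupp d hd).symm)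
    · exfalso
      set n := f.vars.max' (Finset.nonempty_of_ne_empty hv) with hn
      have hmem : n ∈ f.vars := Finset.max'_mem _ _
      have hnz : pderiv n f ≠ 0 := pderiv_ne_zero_of_mem_vars hmem
      have hvs : f.vars ⊆ Finset.range (n+1) := fun k hk =>
        Finset.mem_range.2 (Nat.lt_succ_of_le (Finset.le_max' _ _ hk))
      have hnot : (n+1) ∉ f.vars := fun hh => by
        have := Finset.le_max' f.vars _ hh
        omega
      have h0 : pderiv (n+1) (dx f) = 0 := by rw [H, map_zero]
      rw [dx_eq_sum hvs, map_sum] at h0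
      have hcom : ∀ k, pderiv (n+1) (pderiv k f) = 0 := fun k => by
        rw [pderiv_comm, pderiv_eq_zero_of_notMem_vars hnot, map_zero]
      have hterm : ∀ k ∈ Finset.range (n+1),
          pderiv (n+1) (X (k+1) * pderiv k f)
            = pderiv (n+1) (X (k+1) : MvPolynomial ℕ ℝ) * pderiv k f := by
        intro k _
        rw [pderiv_mul, hcom, mul_zero, add_zero]
      rw [Finset.sum_congr rfl hterm] at h0
      rw [Finset.sum_eq_single_of_mem n (Finset.self_mem_range_succ n)] at h0
      · rw [pderiv_X_self, one_mul] at h0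
        exact hnz h0
      · intro k _ hk
        rw [pderiv_X_of_ne (by omega), zero_mul]
  · rintro ⟨c, rfl⟩
    rw [dx_eq]
    exact derivation_C _ _

lemma DxL_apply (f : MvPolynomial ℕ ℝ) : DxL f = DxD f := rfl

lemma degree_add (a b : ℕ →₀ ℕ) : (a + b).degree = a.degree + b.degree := by
  simp [Finsupp.degree_eq_weight_one, map_add]

lemma degree_single_one (k : ℕ) : (Finsupp.single k 1).degree = 1 := by
  rw [Finsupp.degree_apply, Finsupp.support_single_ne_zero _ one_ne_zero, Finset.sum_singleton,
    Finsupp.single_eq_same]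

lemma mem_support_degree {f : MvPolynomial ℕ ℝ} {d : ℕ} (hf : f.IsHomogeneous d)
    {u : ℕ →₀ ℕ} (hu : u ∈ f.support) : u.degree = d := by
  by_contra h
  exact mem_support_iff.1 hu (hf.coeff_eq_zero h)

lemma pderiv_isHomogeneous {f : MvPolynomial ℕ ℝ} {d k : ℕ} (hf : f.IsHomogeneous d) :
    (pderiv k f).IsHomogeneous (d - 1) := by
  conv_lhs => rw [f.as_sum]
  rw [map_sum]
  apply IsHomogeneous.sum
  intro u hu
  rw [pderiv_monomial]
  rcases Nat.eq_zero_or_pos (u k) with h0 | h1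
  · rw [h0]
    norm_num
    exact isHomogeneous_zero _ _ _
  · apply isHomogeneous_monomial
    have hle : Finsupp.single k 1 ≤ u := by
      rw [Finsupp.single_le_iff]; exact h1
    have : (u - Finsupp.single k 1) + Finsupp.single k 1 = u := tsub_add_cancel_of_le hle
    have hdeg : u.degree = (u - Finsupp.single k 1).degree + 1 := by
      conv_lhs => rw [← this]
      rw [degree_add, degree_single_one]
    have hd := mem_support_degree hf hu
    omega

lemma vars_eq_empty_of_isHomogeneous_zero {f : MvPolynomial ℕ ℝ} (hf : f.IsHomogeneous 0) :
    f.vars = ∅ := by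
  apply Finset.eq_empty_iff_forall_notMem.2
  intro a ha
  obtain ⟨u, hu, hau⟩ := (mem_vars a).1 ha
  have := mem_support_degree hf hu
  rw [Finsupp.degree_eq_zero_iff] at this
  subst this
  simp at hau

lemma DxD_isHomogeneous {f : MvPolynomial ℕ ℝ} {d : ℕ} (hf : f.IsHomogeneous d) :
    (DxD f).IsHomogeneous d := by
  rw [← dx_eq, dx_eq_sum (subset_refl f.vars)]
  cases d with
  | zero =>
    rw [vars_eq_empty_of_isHomogeneous_zero hf]
    simpa using isHomogeneous_zero ℕ ℝ 0
  | succ m =>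
    apply IsHomogeneous.sum
    intro k _
    have h1 : (X (k+1) : MvPolynomial ℕ ℝ).IsHomogeneous 1 := isHomogeneous_X _ _
    have h2 : (pderiv k f).IsHomogeneous m := by
      have := pderiv_isHomogeneous (k := k) hf
      simpa using this
    simpa [add_comm] using h1.mul h2

lemma DxL_pow_isHomogeneous {d : ℕ} (k : ℕ) {f : MvPolynomial ℕ ℝ} (hf : f.IsHomogeneous d) :
    ((DxL ^ k) f).IsHomogeneous d := by
  induction k with
  | zero => simpa using hf
  | succ m ih =>
    rw [pow_succ', Module.End.mul_apply, DxL_apply]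
    exact DxD_isHomogeneous ih

lemma delta_isHomogeneous {f : MvPolynomial ℕ ℝ} {d : ℕ} (hf : f.IsHomogeneous (d + 1)) :
    (delta f).IsHomogeneous d := by
  rw [delta_eq_sum (subset_refl f.vars)]
  apply IsHomogeneous.sum
  intro k _
  have h2 : ((DxL ^ k) (pderiv k f)).IsHomogeneous d :=
    DxL_pow_isHomogeneous k (by simpa using pderiv_isHomogeneous (k := k) hf)
  exact (mem_homogeneousSubmodule _ _).1
    (Submodule.smul_mem _ _ ((mem_homogeneousSubmodule _ _).2 h2))

noncomputable def M : Submodule ℝ (MvPolynomial ℕ ℝ) := LinearMap.range DxL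

/-- Euler's identity for homogeneous polynomials. -/
lemma euler {f : MvPolynomial ℕ ℝ} {d : ℕ} (hf : f.IsHomogeneous d) {s : Finset ℕ}
    (hs : f.vars ⊆ s) : ∑ k ∈ s, X k * pderiv k f = (d : ℝ) • f := by
  have key : ∀ u ∈ f.support, ∑ k ∈ s, X k * pderiv k (monomial u (coeff u f))
      = (d : ℝ) • monomial u (coeff u f) := by
    intro u hu
    have hsub : u.support ⊆ s := fun k hk => hs ((mem_vars k).2 ⟨u, hu, hk⟩)
    rw [← Finset.sum_subset hsub]
    · have hterm : ∀ k ∈ u.support, X k * pderiv k (monomial u (coeff u f))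
          = monomial u (coeff u f * (u k : ℝ)) := by
        intro k hk
        rw [pderiv_monomial, X, monomial_mul, one_mul]
        congr 1
        have hle : Finsupp.single k 1 ≤ u := by
          rw [Finsupp.single_le_iff]
          exact Nat.one_le_iff_ne_zero.2 (Finsupp.mem_support_iff.1 hk)
        rw [add_tsub_cancel_of_le hle]
      rw [Finset.sum_congr rfl hterm]
      have : ∀ k ∈ u.support, monomial u (coeff u f * (u k : ℝ))
          = monomial u ((u k : ℝ) * coeff u f) := fun k _ => by rw [mul_comm]
      rw [Finset.sum_congr rfl this, ← map_sum, ← Finset.sum_mul]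
      have hcast : (∑ k ∈ u.support, (u k : ℝ)) = (d : ℝ) := by
        rw [← mem_support_degree hf hu, Finsupp.degree_apply]
        push_cast
        rfl
      rw [hcast, smul_monomial, smul_eq_mul]
    · intro k _ hk
      rw [Finsupp.notMem_support_iff] at hk
      rw [pderiv_monomial, hk]
      simp
  calc ∑ k ∈ s, X k * pderiv k f
      = ∑ k ∈ s, ∑ u ∈ f.support, X k * pderiv k (monomial u (coeff u f)) := by
        refine Finset.sum_congr rfl fun k _ => ?_
        conv_lhs => rw [f.as_sum]
        rw [map_sum, Finset.mul_sum]
    _ = ∑ u ∈ f.support, ∑ k ∈ s, X k * pderiv k (monomial u (coeff u f)) :=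
        Finset.sum_comm
    _ = ∑ u ∈ f.support, (d : ℝ) • monomial u (coeff u f) := Finset.sum_congr rfl key
    _ = (d : ℝ) • f := by rw [← Finset.smul_sum, ← f.as_sum]

lemma ibp (k : ℕ) (h : MvPolynomial ℕ ℝ) :
    X k * h - ((-1 : ℝ) ^ k) • (X 0 * (DxL ^ k) h) ∈ M := by
  induction k generalizing h with
  | zero =>
    rw [pow_zero, pow_zero, one_smul, Module.End.one_apply, sub_self]
    exact M.zero_mem
  | succ m ih =>
    have hD : DxD (X m * h) = X m * DxD h + X (m+1) * h := by
      rw [Derivation.leibniz, smul_eq_mul, smul_eq_mul, DxD_X, mul_comm h]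
    have h1 : DxD (X m * h) ∈ M := ⟨X m * h, rfl⟩
    have h2 := ih (DxD h)
    have h3 := M.sub_mem h1 h2
    have hpow : (DxL ^ (m+1)) h = (DxL ^ m) (DxD h) := by
      rw [pow_succ, Module.End.mul_apply]; rfl
    convert h3 using 1
    rw [hD, hpow, pow_succ]
    module

lemma key_mem {f : MvPolynomial ℕ ℝ} {d : ℕ} (hf : f.IsHomogeneous d) :
    (d : ℝ) • f - X 0 * delta f ∈ M := by
  rw [delta_eq_sum (subset_refl f.vars), Finset.mul_sum,
    ← euler hf (subset_refl f.vars), ← Finset.sum_sub_distrib]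
  apply Submodule.sum_mem
  intro k _
  rw [mul_smul_comm]
  exact ibp k (pderiv k f)

lemma vars_hc (n : ℕ) (f : MvPolynomial ℕ ℝ) :
    (homogeneousComponent n f).vars ⊆ f.vars := by
  intro a ha
  obtain ⟨u, hu, hau⟩ := (mem_vars a).1 ha
  refine (mem_vars a).2 ⟨u, ?_, hau⟩
  have hne := mem_support_iff.1 hu
  rw [coeff_homogeneousComponent] at hne
  refine mem_support_iff.2 fun hc => hne ?_
  rw [hc]
  simp

lemma delta_sum_components (f : MvPolynomial ℕ ℝ) :
    delta f = ∑ i ∈ Finset.range (f.totalDegree + 1), delta (homogeneousComponent i f) := by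
  have hstep : ∀ i ∈ Finset.range (f.totalDegree + 1), delta (homogeneousComponent i f)
      = ∑ k ∈ f.vars, ((-1 : ℝ) ^ k) • ((DxL ^ k) (pderiv k (homogeneousComponent i f))) :=
    fun i _ => delta_eq_sum (vars_hc i f)
  rw [delta_eq_sum (subset_refl f.vars), Finset.sum_congr rfl hstep, Finset.sum_comm]
  refine Finset.sum_congr rfl fun k _ => ?_
  rw [← Finset.smul_sum, ← map_sum, ← map_sum, sum_homogeneousComponent]

lemma delta_zero : delta (0 : MvPolynomial ℕ ℝ) = 0 := by
  rw [delta_eq_sum (s := ∅) (by rw [vars_0])]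
  simp

theorem part_two (f : MvPolynomial ℕ ℝ) (h0 : coeff 0 f = 0) (hδ : delta f = 0) :
    ∃ g : MvPolynomial ℕ ℝ, f = dx g := by
  set n := f.totalDegree with hn
  have hc0 : homogeneousComponent 0 f = 0 := by
    rw [homogeneousComponent_zero, h0, map_zero]
  have hcomp : ∀ i ∈ Finset.range (n+1), delta (homogeneousComponent i f) = 0 := by
    intro i hi
    rcases i with _ | m
    · rw [hc0, delta_zero]
    · have hsum : ∑ j ∈ Finset.range (n+1), delta (homogeneousComponent j f) = 0 := by
        rw [← delta_sum_components, hδ]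
      have hmap := congrArg (homogeneousComponent m) hsum
      rw [map_sum, map_zero] at hmap
      rw [Finset.sum_eq_single_of_mem (m+1) hi] at hmap
      · rwa [homogeneousComponent_of_mem ((mem_homogeneousSubmodule _ _).2
          (delta_isHomogeneous (homogeneousComponent_isHomogeneous (m+1) f))),
          if_pos rfl] at hmap
      · intro j hj hne
        rcases j with _ | l
        · rw [hc0, delta_zero, map_zero]
        · rw [homogeneousComponent_of_mem ((mem_homogeneousSubmodule _ _).2
            (delta_isHomogeneous (homogeneousComponent_isHomogeneous (l+1) f))),
            if_neg (by omega)]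
  have hMi : ∀ i ∈ Finset.range (n+1), homogeneousComponent i f ∈ M := by
    intro i hi
    rcases i with _ | m
    · rw [hc0]; exact M.zero_mem
    · have h1 := key_mem (homogeneousComponent_isHomogeneous (m+1) f)
      rw [hcomp (m+1) hi, mul_zero, sub_zero] at h1
      have h2 := M.smul_mem (((m+1 : ℕ) : ℝ))⁻¹ h1
      rwa [inv_smul_smul₀ (Nat.cast_ne_zero.2 (Nat.succ_ne_zero m))] at h2
  have hfM : f ∈ M := by
    have := Submodule.sum_mem M hMi
    rwa [sum_homogeneousComponent] at this
  obtain ⟨g, hg⟩ := hfM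
  exact ⟨g, by rw [dx_eq]; exact hg.symm⟩

/-- exactness of the variational complex:
(i) `ker ∂ₓ = ℝ·1`;
(ii) if `f` has zero constant term and `δ f = 0`, then `f = ∂ₓ g` for some `g`. -/
theorem variational_complex_exact :
    (∀ f : MvPolynomial ℕ ℝ, dx f = 0 ↔ ∃ c : ℝ, f = C c) ∧
    (∀ f : MvPolynomial ℕ ℝ, coeff 0 f = 0 → delta f = 0 →
      ∃ g : MvPolynomial ℕ ℝ, f = dx g) := by
  exact ⟨ker_dx, part_two⟩
end

section
/- For every n ≥ 0 and every f ∈ A_n (homogeneous of total degree n in the variables u_k), one has δ(u_0 · δf) = n · δf. -/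
open MvPolynomial

namespace DeltaProofAux

open Finset

lemma pderiv_comm (i j : ℕ) (f : MvPolynomial ℕ ℝ) :
    pderiv i (pderiv j f) = pderiv j (pderiv i f) := by
  induction f using MvPolynomial.induction_on' with
  | monomial d c =>
    rcases eq_or_ne i j with rfl | hij
    · rfl
    · simp only [pderiv_monomial, Finsupp.tsub_apply, Finsupp.single_apply, if_neg hij,
        if_neg (Ne.symm hij), tsub_zero, tsub_tsub]
      rw [add_comm (Finsupp.single j 1)]
      ring_nf
  | add p q hp hq => simp [map_add, hp, hq]

/-- A canonical bound for the variables occurring in `f`. -/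
noncomputable def bd (f : MvPolynomial ℕ ℝ) : ℕ := f.vars.sup id + 1

lemma lt_bd {f : MvPolynomial ℕ ℝ} {k : ℕ} (h : k ∈ f.vars) : k < bd f := by
  have := Finset.le_sup (f := id) h
  simpa [bd, Nat.lt_succ_iff] using this

lemma pderiv_bd {f : MvPolynomial ℕ ℝ} {k : ℕ} (h : bd f ≤ k) : pderiv k f = 0 := by
  refine pderiv_eq_zero_of_notMem_vars fun hk => ?_
  exact absurd (lt_bd hk) (not_lt.mpr h)

lemma dx_sum {f : MvPolynomial ℕ ℝ} {N : ℕ} (h : ∀ k, N ≤ k → pderiv k f = 0) :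
    dx f = ∑ k ∈ range N, X (k + 1) * pderiv k f := by
  rw [dx]
  refine finsum_eq_sum_of_support_subset _ fun k hk => ?_
  simp only [Function.mem_support] at hk
  by_contra hk'
  have : N ≤ k := le_of_not_gt fun hlt => hk' (Finset.mem_range.mpr hlt)
  rw [h k this, mul_zero] at hk
  exact hk rfl

lemma dx_zero : dx (0 : MvPolynomial ℕ ℝ) = 0 := by
  rw [dx_sum (N := 0) (by simp)]; simp

lemma dx_iter_zero (k : ℕ) : dx^[k] (0 : MvPolynomial ℕ ℝ) = 0 := by
  induction k with
  | zero => rfl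
  | succ k ih => rw [Function.iterate_succ_apply, dx_zero, ih]

lemma delta_sum {f : MvPolynomial ℕ ℝ} {N : ℕ} (h : ∀ k, N ≤ k → pderiv k f = 0) :
    delta f = ∑ k ∈ range N, ((-1 : ℝ) ^ k) • (dx^[k] (pderiv k f)) := by
  rw [delta]
  refine finsum_eq_sum_of_support_subset _ fun k hk => ?_
  simp only [Function.mem_support] at hk
  by_contra hk'
  have : N ≤ k := le_of_not_gt fun hlt => hk' (Finset.mem_range.mpr hlt)
  rw [h k this] at hk
  simp [dx_iter_zero] at hk

lemma dx_add (f g : MvPolynomial ℕ ℝ) : dx (f + g) = dx f + dx g := by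
  set N := max (bd f) (bd g) with hN
  have hf : ∀ k, N ≤ k → pderiv k f = 0 := fun k hk => pderiv_bd (le_trans (le_max_left _ _) hk)
  have hg : ∀ k, N ≤ k → pderiv k g = 0 := fun k hk => pderiv_bd (le_trans (le_max_right _ _) hk)
  have hfg : ∀ k, N ≤ k → pderiv k (f + g) = 0 := fun k hk => by
    rw [map_add, hf k hk, hg k hk, add_zero]
  rw [dx_sum hfg, dx_sum hf, dx_sum hg, ← Finset.sum_add_distrib]
  refine Finset.sum_congr rfl fun k _ => ?_
  rw [map_add, mul_add]

lemma dx_smul (c : ℝ) (f : MvPolynomial ℕ ℝ) : dx (c • f) = c • dx f := by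
  have hf : ∀ k, bd f ≤ k → pderiv k f = 0 := fun k hk => pderiv_bd hk
  have hcf : ∀ k, bd f ≤ k → pderiv k (c • f) = 0 := fun k hk => by
    rw [Derivation.map_smul, hf k hk, smul_zero]
  rw [dx_sum hcf, dx_sum hf, Finset.smul_sum]
  refine Finset.sum_congr rfl fun k _ => ?_
  rw [Derivation.map_smul, mul_smul_comm]

/-- `dx` bundled as a linear map. -/
noncomputable def dxL : MvPolynomial ℕ ℝ →ₗ[ℝ] MvPolynomial ℕ ℝ where
  toFun := dx
  map_add' := dx_add
  map_smul' := dx_smul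

lemma dxL_apply (f : MvPolynomial ℕ ℝ) : dxL f = dx f := rfl

lemma dx_finset_sum {ι : Type*} (s : Finset ι) (g : ι → MvPolynomial ℕ ℝ) :
    dx (∑ i ∈ s, g i) = ∑ i ∈ s, dx (g i) :=
  map_sum dxL g s

lemma dx_mul (f g : MvPolynomial ℕ ℝ) : dx (f * g) = dx f * g + f * dx g := by
  set N := max (bd f) (bd g) with hN
  have hf : ∀ k, N ≤ k → pderiv k f = 0 := fun k hk => pderiv_bd (le_trans (le_max_left _ _) hk)
  have hg : ∀ k, N ≤ k → pderiv k g = 0 := fun k hk => pderiv_bd (le_trans (le_max_right _ _) hk)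
  have hfg : ∀ k, N ≤ k → pderiv k (f * g) = 0 := fun k hk => by
    rw [pderiv_mul, hf k hk, hg k hk, mul_zero, zero_mul, add_zero]
  rw [dx_sum hfg, dx_sum hf, dx_sum hg, Finset.sum_mul, Finset.mul_sum, ← Finset.sum_add_distrib]
  refine Finset.sum_congr rfl fun k _ => ?_
  rw [pderiv_mul]
  ring

lemma dx_X (j : ℕ) : dx (X j : MvPolynomial ℕ ℝ) = X (j + 1) := by
  have h : ∀ k, (j + 1) ≤ k → pderiv k (X j : MvPolynomial ℕ ℝ) = 0 := fun k hk =>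
    pderiv_X_of_ne (by omega)
  rw [dx_sum h]
  rw [Finset.sum_eq_single_of_mem j (Finset.mem_range.mpr (by omega))]
  · simp
  · intro b _ hb
    rw [pderiv_X_of_ne (Ne.symm hb), mul_zero]

lemma dx_iter_X (k j : ℕ) : dx^[k] (X j : MvPolynomial ℕ ℝ) = X (j + k) := by
  induction k generalizing j with
  | zero => rfl
  | succ k ih =>
    rw [Function.iterate_succ_apply, dx_X, ih]
    congr 1
    omega

lemma dx_iter_add (k : ℕ) (f g : MvPolynomial ℕ ℝ) :
    dx^[k] (f + g) = dx^[k] f + dx^[k] g := by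
  induction k generalizing f g with
  | zero => rfl
  | succ k ih => rw [Function.iterate_succ_apply, Function.iterate_succ_apply,
      Function.iterate_succ_apply, dx_add, ih]

lemma dx_iter_smul (k : ℕ) (c : ℝ) (f : MvPolynomial ℕ ℝ) :
    dx^[k] (c • f) = c • dx^[k] f := by
  induction k generalizing f with
  | zero => rfl
  | succ k ih => rw [Function.iterate_succ_apply, Function.iterate_succ_apply, dx_smul, ih]

lemma pderiv_dx_zero (f : MvPolynomial ℕ ℝ) : pderiv 0 (dx f) = dx (pderiv 0 f) := by
  have hf : ∀ k, bd f ≤ k → pderiv k f = 0 := fun k hk => pderiv_bd hk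
  have hf0 : ∀ k, bd f ≤ k → pderiv k (pderiv 0 f) = 0 := fun k hk => by
    rw [pderiv_comm, hf k hk, map_zero]
  rw [dx_sum hf, map_sum, dx_sum hf0]
  refine Finset.sum_congr rfl fun j _ => ?_
  rw [pderiv_mul, pderiv_X_of_ne (by omega), zero_mul, zero_add, pderiv_comm]

lemma pderiv_dx_succ (k : ℕ) (f : MvPolynomial ℕ ℝ) :
    pderiv (k + 1) (dx f) = dx (pderiv (k + 1) f) + pderiv k f := by
  set N := max (bd f) (k + 1) with hN
  have hf : ∀ j, N ≤ j → pderiv j f = 0 := fun j hj => pderiv_bd (le_trans (le_max_left _ _) hj)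
  have hf' : ∀ j, N ≤ j → pderiv j (pderiv (k + 1) f) = 0 := fun j hj => by
    rw [pderiv_comm, hf j hj, map_zero]
  rw [dx_sum hf, map_sum, dx_sum hf']
  have : ∀ j ∈ range N, pderiv (k + 1) (X (j + 1) * pderiv j f)
      = X (j + 1) * pderiv j (pderiv (k + 1) f)
        + (if j = k then pderiv k f else 0) := by
    intro j _
    rw [pderiv_mul, pderiv_comm]
    rcases eq_or_ne j k with rfl | hj
    · rw [if_pos rfl, pderiv_X_self, one_mul, add_comm]
    · rw [if_neg hj, pderiv_X_of_ne (by omega), zero_mul, zero_add, add_zero]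
  rw [Finset.sum_congr rfl this, Finset.sum_add_distrib, Finset.sum_ite_eq'
    (range N) k (fun _ => pderiv k f), if_pos (Finset.mem_range.mpr (by omega))]

lemma pderiv_dx_bd {f : MvPolynomial ℕ ℝ} {N : ℕ} (h : ∀ k, N ≤ k → pderiv k f = 0) :
    ∀ k, N + 1 ≤ k → pderiv k (dx f) = 0 := by
  intro k hk
  obtain ⟨m, rfl⟩ : ∃ m, k = m + 1 := ⟨k - 1, by omega⟩
  rw [pderiv_dx_succ, h m (by omega), h (m + 1) (by omega), dx_zero, add_zero]

lemma pderiv_dx_iter_bd {f : MvPolynomial ℕ ℝ} {N : ℕ} (h : ∀ k, N ≤ k → pderiv k f = 0)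
    (m : ℕ) : ∀ k, N + m ≤ k → pderiv k (dx^[m] f) = 0 := by
  induction m with
  | zero => simpa using h
  | succ m ih =>
    intro k hk
    rw [Function.iterate_succ_apply']
    exact pderiv_dx_bd ih k (by omega)

lemma delta_add (f g : MvPolynomial ℕ ℝ) : delta (f + g) = delta f + delta g := by
  set N := max (bd f) (bd g) with hN
  have hf : ∀ k, N ≤ k → pderiv k f = 0 := fun k hk => pderiv_bd (le_trans (le_max_left _ _) hk)
  have hg : ∀ k, N ≤ k → pderiv k g = 0 := fun k hk => pderiv_bd (le_trans (le_max_right _ _) hk)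
  have hfg : ∀ k, N ≤ k → pderiv k (f + g) = 0 := fun k hk => by
    rw [map_add, hf k hk, hg k hk, add_zero]
  rw [delta_sum hfg, delta_sum hf, delta_sum hg, ← Finset.sum_add_distrib]
  refine Finset.sum_congr rfl fun k _ => ?_
  rw [map_add, dx_iter_add, smul_add]

lemma delta_smul (c : ℝ) (f : MvPolynomial ℕ ℝ) : delta (c • f) = c • delta f := by
  have hf : ∀ k, bd f ≤ k → pderiv k f = 0 := fun k hk => pderiv_bd hk
  have hcf : ∀ k, bd f ≤ k → pderiv k (c • f) = 0 := fun k hk => by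
    rw [Derivation.map_smul, hf k hk, smul_zero]
  rw [delta_sum hcf, delta_sum hf, Finset.smul_sum]
  refine Finset.sum_congr rfl fun k _ => ?_
  rw [Derivation.map_smul, dx_iter_smul, smul_comm]

/-- `δ ∘ ∂ₓ = 0`. -/
lemma delta_dx (g : MvPolynomial ℕ ℝ) : delta (dx g) = 0 := by
  obtain ⟨N, hN⟩ : ∃ N, ∀ k, N ≤ k → pderiv k g = 0 := ⟨bd g, fun k hk => pderiv_bd hk⟩
  have hdx : ∀ k, N + 1 ≤ k → pderiv k (dx g) = 0 := pderiv_dx_bd hN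
  rw [delta_sum hdx]
  -- telescoping sum
  set a : ℕ → MvPolynomial ℕ ℝ := fun m => ((-1 : ℝ) ^ m) • dx^[m + 1] (pderiv m g) with ha
  have hterm : ∀ m, ((-1 : ℝ) ^ (m + 1)) • dx^[m + 1] (pderiv (m + 1) (dx g))
      = a (m + 1) - a m := by
    intro m
    rw [pderiv_dx_succ, dx_iter_add, smul_add,
      ← Function.iterate_succ_apply dx (m + 1) (pderiv (m + 1) g)]
    have h2 : ((-1 : ℝ) ^ (m + 1)) • dx^[m + 1] (pderiv m g)
        = -(((-1 : ℝ) ^ m) • dx^[m + 1] (pderiv m g)) := by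
      rw [pow_succ, mul_comm, mul_smul, neg_one_smul]
    rw [h2, ha, sub_eq_add_neg]
  rw [Finset.sum_range_succ']
  simp only [hterm]
  rw [Finset.sum_range_sub a N]
  have h0 : ((-1 : ℝ) ^ 0) • dx^[0] (pderiv 0 (dx g)) = a 0 := by
    rw [ha]
    simp only [pow_zero, one_smul, Function.iterate_zero_apply, Function.iterate_one]
    exact pderiv_dx_zero g
  rw [h0]
  have : a N = 0 := by
    rw [ha]
    simp only [hN N le_rfl, dx_iter_zero, smul_zero]
  rw [this]
  ring

/-- Integration by parts: `(-1)^k w · ∂ₓ^k h  ≡  (∂ₓ^k w) · h  (mod Im ∂ₓ)`. -/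
lemma adjoint (k : ℕ) (w h : MvPolynomial ℕ ℝ) :
    ∃ r, ((-1 : ℝ) ^ k) • (w * dx^[k] h) = dx^[k] w * h + dx r := by
  induction k generalizing w with
  | zero => exact ⟨0, by simp [dx_zero]⟩
  | succ k ih =>
    obtain ⟨r', hr'⟩ := ih (dx w)
    refine ⟨r' + ((-1 : ℝ) ^ (k + 1)) • (w * dx^[k] h), ?_⟩
    have hleib : w * dx^[k + 1] h = dx (w * dx^[k] h) - dx w * dx^[k] h := by
      rw [Function.iterate_succ_apply', dx_mul]
      ring
    rw [hleib, smul_sub, dx_add, dx_smul]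
    have : ((-1 : ℝ) ^ (k + 1)) • (dx w * dx^[k] h)
        = -(((-1 : ℝ) ^ k) • (dx w * dx^[k] h)) := by
      rw [pow_succ, ← neg_smul]
      congr 1
      ring
    rw [this, hr', Function.iterate_succ_apply]
    ring

lemma adjoint' (k : ℕ) (h : MvPolynomial ℕ ℝ) :
    ∃ r, ((-1 : ℝ) ^ k) • (X 0 * dx^[k] h) = X k * h + dx r := by
  obtain ⟨r, hr⟩ := adjoint k (X 0) h
  exact ⟨r, by rw [hr, dx_iter_X, Nat.zero_add]⟩

/-- Euler's identity for a single monomial. -/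
lemma euler_monomial (d : ℕ →₀ ℕ) (c : ℝ) {N : ℕ} (hd : ∀ k ∈ d.support, k < N) :
    ∑ k ∈ range N, X k * pderiv k (monomial d c)
      = ((d.sum fun _ m => m : ℕ) : ℝ) • monomial d c := by
  have hterm : ∀ k ∈ range N, X k * pderiv k (monomial d c)
      = ((d k : ℝ)) • monomial d c := by
    intro k _
    rw [pderiv_monomial]
    rcases Nat.eq_zero_or_pos (d k) with h0 | hpos
    · simp [h0]
    · rw [X, monomial_mul, one_mul]
      have : Finsupp.single k 1 + (d - Finsupp.single k 1) = d := by
        ext j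
        rcases eq_or_ne j k with rfl | hj
        · simp [Finsupp.single_apply]
          omega
        · simp [Finsupp.single_apply, Ne.symm hj]
      rw [this, smul_monomial, smul_eq_mul, mul_comm]
  rw [Finset.sum_congr rfl hterm, ← Finset.sum_smul]
  congr 1
  rw [Finsupp.sum]
  push_cast
  rw [Finset.sum_subset (fun k hk => Finset.mem_range.mpr (hd k hk))]
  intro k _ hk
  rw [Finsupp.notMem_support_iff] at hk
  simp [hk]

/-- Euler's identity for homogeneous polynomials. -/
lemma euler {f : MvPolynomial ℕ ℝ} {n : ℕ} (hf : f.IsHomogeneous n) :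
    ∑ k ∈ range (bd f), X k * pderiv k f = (n : ℝ) • f := by
  have hrw : ∀ k, pderiv k f = ∑ d ∈ f.support, pderiv k (monomial d (coeff d f)) := by
    intro k
    conv_lhs => rw [f.as_sum]
    rw [map_sum]
  rw [Finset.sum_congr rfl (fun k _ => by rw [hrw k, Finset.mul_sum])]
  rw [Finset.sum_comm]
  have : ∀ d ∈ f.support, ∑ k ∈ range (bd f), X k * pderiv k (monomial d (coeff d f))
      = (n : ℝ) • monomial d (coeff d f) := by
    intro d hd
    rw [euler_monomial d (coeff d f) (fun k hk => lt_bd (mem_vars k |>.mpr ⟨d, hd, hk⟩))]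
    congr 2
    have hc : coeff d f ≠ 0 := (MvPolynomial.mem_support_iff).mp hd
    have := hf hc
    simpa [Finsupp.weight, Finsupp.linearCombination, Finsupp.sum] using this
  rw [Finset.sum_congr rfl this, ← Finset.smul_sum, ← f.as_sum]

end DeltaProofAux

open DeltaProofAux Finset in
/-- for `f ∈ A_n` homogeneous of total degree `n`,
`δ(u₀ · δf) = n · δf`. -/
theorem delta_u0_delta_eq_smul :
    ∀ (n : ℕ) (f : MvPolynomial ℕ ℝ), f.IsHomogeneous n →
      delta (X 0 * delta f) = (n : ℝ) • delta f := by
  intro n f hf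
  set N := bd f with hNdef
  have hN : ∀ k, N ≤ k → pderiv k f = 0 := fun k hk => pderiv_bd hk
  -- Step 1: X 0 * delta f = (n : ℝ) • f + dx r for some r
  have key : ∃ r, X 0 * delta f = (n : ℝ) • f + dx r := by
    rw [delta_sum hN, Finset.mul_sum]
    refine ⟨∑ k ∈ range N, Classical.choose (adjoint' k (pderiv k f)), ?_⟩
    have hterm : ∀ k ∈ range N, X 0 * ((-1 : ℝ) ^ k) • dx^[k] (pderiv k f)
        = X k * pderiv k f + dx (Classical.choose (adjoint' k (pderiv k f))) := by
      intro k _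
      rw [mul_smul_comm]
      exact Classical.choose_spec (adjoint' k (pderiv k f))
    rw [Finset.sum_congr rfl hterm, Finset.sum_add_distrib, dx_finset_sum]
    congr 1
    exact euler hf
  obtain ⟨r, hkey⟩ := key
  rw [hkey, delta_add, delta_smul, delta_dx, add_zero]
end

section
/- Define the sequence (c_g)_{g≥0} by c_0 = −1 and, for g ≥ 1, c_g = (1/2) Σ_{g_1=1}^{g−1} c_{g_1} c_{g−g_1} + (1/12)(5g−4)(5g−6) c_{g−1}. Then the functions u_g(t_0, t_2) = c_g t_2^{3g−1} (1 − 2 t_0 t_2)^{−(5g−1)/2} + δ_{g,0} t_2^{−1} (where δ_{g,0} is the Kronecker delta) satisfy, on the domain t_2 ≠ 0 and 1 − 2 t_0 t_2 > 0, the genus-zero equation u_0 = t_0 + (t_2/2) u_0² and for every g ≥ 1 the recursion u_g = (t_2/2) Σ_{g_1 + g_2 = g} u_{g_1} u_{g_2} + (t_2/12) ∂² u_{g−1}/∂t_0². In particular c_1 = 1/12 and c_2 = 49/288. -/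
private lemma base_hasDerivAt (t2 x : ℝ) :
    HasDerivAt (fun y : ℝ => 1 - 2 * y * t2) (-(2 * t2)) x := by
  have h : HasDerivAt (fun y : ℝ => 2 * y * t2) (2 * t2) x := by
    simpa using ((hasDerivAt_id x).const_mul 2).mul_const t2
  simpa using h.const_sub 1

private lemma rpow_hasDerivAt (p t2 : ℝ) {x : ℝ} (hx : 1 - 2 * x * t2 ≠ 0) :
    HasDerivAt (fun y : ℝ => (1 - 2 * y * t2) ^ p)
      (p * (1 - 2 * x * t2) ^ (p - 1) * (-(2 * t2))) x := by
  have h := (Real.hasDerivAt_rpow_const (x := 1 - 2 * x * t2) (p := p)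
    (Or.inl hx)).comp x (base_hasDerivAt t2 x)
  exact h

private lemma second_deriv (K C p t0 t2 : ℝ) (hB : 0 < 1 - 2 * t0 * t2) :
    deriv (deriv fun x : ℝ => K * (1 - 2 * x * t2) ^ p + C) t0
      = K * (p * (p - 1)) * (1 - 2 * t0 * t2) ^ (p - 2) * (4 * t2 ^ 2) := by
  have hcont : ContinuousAt (fun x : ℝ => 1 - 2 * x * t2) t0 := by fun_prop
  have hev : ∀ᶠ x in nhds t0, 0 < 1 - 2 * x * t2 :=
    hcont.eventually (eventually_gt_nhds hB)
  have hdf : (deriv fun x : ℝ => K * (1 - 2 * x * t2) ^ p + C)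
      =ᶠ[nhds t0] fun x => K * (p * (1 - 2 * x * t2) ^ (p - 1) * (-(2 * t2))) :=
    hev.mono fun x hx => (((rpow_hasDerivAt p t2 hx.ne').const_mul K).add_const C).deriv
  rw [hdf.deriv_eq]
  have heq : (fun x : ℝ => K * (p * (1 - 2 * x * t2) ^ (p - 1) * (-(2 * t2))))
      = fun x : ℝ => (K * p * (-(2 * t2))) * (1 - 2 * x * t2) ^ (p - 1) := by
    funext x; ring
  rw [heq, ((rpow_hasDerivAt (p - 1) t2 hB.ne').const_mul (K * p * (-(2 * t2)))).deriv,
    show p - 1 - 1 = p - 2 by ring]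
  ring

private lemma prod_pows {t0 t2 : ℝ} (ht2 : t2 ≠ 0) (hB : 0 < 1 - 2 * t0 * t2)
    {g i : ℕ} (hi : i ≤ g) (a b : ℝ) :
    (a * t2 ^ (3 * (i : ℤ) - 1) * (1 - 2 * t0 * t2) ^ (-(5 * (i : ℝ) - 1) / 2))
      * (b * t2 ^ (3 * ((g - i : ℕ) : ℤ) - 1)
        * (1 - 2 * t0 * t2) ^ (-(5 * ((g - i : ℕ) : ℝ) - 1) / 2))
      = a * b * (t2 ^ (3 * (g : ℤ) - 2) * (1 - 2 * t0 * t2) ^ (-(5 * (g : ℝ) - 2) / 2)) := by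
  have h1 : t2 ^ (3 * (i : ℤ) - 1) * t2 ^ (3 * ((g - i : ℕ) : ℤ) - 1)
      = t2 ^ (3 * (g : ℤ) - 2) := by
    rw [← zpow_add₀ ht2]
    congr 1
    have h : ((g - i : ℕ) : ℤ) = (g : ℤ) - i := by omega
    rw [h]; ring
  have h2 : (1 - 2 * t0 * t2) ^ (-(5 * (i : ℝ) - 1) / 2)
      * (1 - 2 * t0 * t2) ^ (-(5 * ((g - i : ℕ) : ℝ) - 1) / 2)
      = (1 - 2 * t0 * t2) ^ (-(5 * (g : ℝ) - 2) / 2) := by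
    rw [← Real.rpow_add hB]
    congr 1
    have h : ((g - i : ℕ) : ℝ) = (g : ℝ) - i := Nat.cast_sub hi
    rw [h]; ring
  calc (a * t2 ^ (3 * (i : ℤ) - 1) * (1 - 2 * t0 * t2) ^ (-(5 * (i : ℝ) - 1) / 2))
      * (b * t2 ^ (3 * ((g - i : ℕ) : ℤ) - 1)
        * (1 - 2 * t0 * t2) ^ (-(5 * ((g - i : ℕ) : ℝ) - 1) / 2))
      = a * b * ((t2 ^ (3 * (i : ℤ) - 1) * t2 ^ (3 * ((g - i : ℕ) : ℤ) - 1))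
        * ((1 - 2 * t0 * t2) ^ (-(5 * (i : ℝ) - 1) / 2)
          * (1 - 2 * t0 * t2) ^ (-(5 * ((g - i : ℕ) : ℝ) - 1) / 2))) := by ring
    _ = _ := by rw [h1, h2]



/-- The genus-`g` specific heat ansatz
`u_g(t₀,t₂) = c_g t₂^{3g−1} (1 − 2t₀t₂)^{−(5g−1)/2} + δ_{g,0} t₂⁻¹`. -/
noncomputable def U (c : ℕ → ℝ) (g : ℕ) (t0 t2 : ℝ) : ℝ :=
  c g * t2 ^ (3 * (g : ℤ) - 1) * (1 - 2 * t0 * t2) ^ (-(5 * (g : ℝ) - 1) / 2)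
    + (if g = 0 then t2⁻¹ else 0)

/-- if `c 0 = −1` and
`c g = (1/2) Σ_{g₁=1}^{g−1} c_{g₁} c_{g−g₁} + (1/12)(5g−4)(5g−6) c_{g−1}` for `g ≥ 1`,
then `c 1 = 1/12`, `c 2 = 49/288`, and on the domain `t₂ ≠ 0`, `1 − 2t₀t₂ > 0` the
functions `u_g = U c g` satisfy the genus-zero equation `u₀ = t₀ + (t₂/2) u₀²` and,
for `g ≥ 1`, `u_g = (t₂/2) Σ_{g₁+g₂=g} u_{g₁} u_{g₂} + (t₂/12) ∂²u_{g−1}/∂t₀²`. -/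
theorem genus_expansion_solution (c : ℕ → ℝ) (hc0 : c 0 = -1)
    (hcrec : ∀ g : ℕ, 1 ≤ g →
      c g = (1 / 2) * (∑ i ∈ Finset.Ico 1 g, c i * c (g - i))
        + (1 / 12) * (5 * (g : ℝ) - 4) * (5 * (g : ℝ) - 6) * c (g - 1)) :
    c 1 = 1 / 12 ∧ c 2 = 49 / 288 ∧
    ∀ t0 t2 : ℝ, t2 ≠ 0 → 0 < 1 - 2 * t0 * t2 →
      (U c 0 t0 t2 = t0 + t2 / 2 * (U c 0 t0 t2) ^ 2) ∧
      (∀ g : ℕ, 1 ≤ g →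
        U c g t0 t2
          = t2 / 2 * (∑ i ∈ Finset.range (g + 1), U c i t0 t2 * U c (g - i) t0 t2)
            + t2 / 12 * deriv (deriv fun x => U c (g - 1) x t2) t0) := by
  have hc1 : c 1 = 1 / 12 := by
    rw [hcrec 1 le_rfl]
    simp [hc0]
    norm_num
  have hc2 : c 2 = 49 / 288 := by
    rw [hcrec 2 (by norm_num)]
    rw [show Finset.Ico 1 2 = {1} from rfl]
    simp [hc1]
    norm_num
  refine ⟨hc1, hc2, ?_⟩
  intro t0 t2 ht2 hB
  constructor
  · -- genus zero
    have key : (1 - 2 * t0 * t2) ^ ((1:ℝ)/2) * (1 - 2 * t0 * t2) ^ ((1:ℝ)/2)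
        = 1 - 2 * t0 * t2 := by
      rw [← Real.rpow_add hB]; norm_num
    simp only [U, hc0, Nat.cast_zero, if_pos rfl]
    norm_num
    field_simp
    have key' : (1 - t2 * 2 * t0) ^ ((1:ℝ)/2) * (1 - t2 * 2 * t0) ^ ((1:ℝ)/2)
        = 1 - 2 * t0 * t2 := by
      rw [show 1 - t2 * 2 * t0 = 1 - 2 * t0 * t2 by ring]; exact key
    linear_combination (-1) * key'
  · -- genus g ≥ 1
    intro g hg
    have hgne : g ≠ 0 := by omega
    have hd : deriv (deriv fun x => U c (g - 1) x t2) t0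
        = (c (g-1) * t2 ^ (3 * ((g-1 : ℕ) : ℤ) - 1))
          * ((-(5 * ((g-1 : ℕ) : ℝ) - 1) / 2) * ((-(5 * ((g-1 : ℕ) : ℝ) - 1) / 2) - 1))
          * (1 - 2 * t0 * t2) ^ ((-(5 * ((g-1 : ℕ) : ℝ) - 1) / 2) - 2) * (4 * t2 ^ 2) :=
      second_deriv (c (g-1) * t2 ^ (3 * ((g-1 : ℕ) : ℤ) - 1))
        (if (g-1 : ℕ) = 0 then t2⁻¹ else 0) (-(5 * ((g-1 : ℕ) : ℝ) - 1) / 2) t0 t2 hB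
    have hterm : ∀ i ∈ Finset.range (g+1), U c i t0 t2 * U c (g-i) t0 t2
        = c i * c (g-i) * (t2 ^ (3*(g:ℤ)-2) * (1 - 2*t0*t2) ^ (-(5*(g:ℝ)-2)/2))
          + ((if i = 0 then t2⁻¹ * (c g * t2 ^ (3*(g:ℤ)-1)
                * (1 - 2*t0*t2) ^ (-(5*(g:ℝ)-1)/2)) else 0)
            + (if i = g then (c g * t2 ^ (3*(g:ℤ)-1)
                * (1 - 2*t0*t2) ^ (-(5*(g:ℝ)-1)/2)) * t2⁻¹ else 0)) := by
      intro i hi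
      have hile : i ≤ g := Nat.lt_succ_iff.mp (Finset.mem_range.mp hi)
      simp only [U]
      rcases eq_or_ne i 0 with h0 | h0
      · subst h0
        have hP := prod_pows ht2 hB (Nat.zero_le g) (c 0) (c g)
        simp only [Nat.sub_zero] at hP ⊢
        simp only [if_pos rfl, if_true, eq_self_iff_true, if_neg hgne, if_neg (show (0:ℕ) ≠ g from fun h => hgne h.symm)]
        linear_combination hP
      · rcases eq_or_ne i g with hgeq | hne
        · subst hgeq
          have hP := prod_pows ht2 hB (le_refl i) (c i) (c (i - i))
          simp only [Nat.sub_self] at hP ⊢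
          simp only [if_neg h0, if_pos rfl, if_true, eq_self_iff_true]
          linear_combination hP
        · have hP := prod_pows ht2 hB hile (c i) (c (g - i))
          simp only [if_neg h0, if_neg hne, if_neg (show ¬(g - i = 0) from by omega)]
          linear_combination hP
    have hsum : (∑ i ∈ Finset.range (g+1), U c i t0 t2 * U c (g-i) t0 t2)
        = (∑ i ∈ Finset.range (g+1), c i * c (g-i))
            * (t2 ^ (3*(g:ℤ)-2) * (1 - 2*t0*t2) ^ (-(5*(g:ℝ)-2)/2))
          + (t2⁻¹ * (c g * t2 ^ (3*(g:ℤ)-1) * (1 - 2*t0*t2) ^ (-(5*(g:ℝ)-1)/2))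
            + (c g * t2 ^ (3*(g:ℤ)-1) * (1 - 2*t0*t2) ^ (-(5*(g:ℝ)-1)/2)) * t2⁻¹) := by
      rw [Finset.sum_congr rfl hterm, Finset.sum_add_distrib, Finset.sum_add_distrib,
        ← Finset.sum_mul, Finset.sum_ite_eq' (Finset.range (g+1)) 0,
        Finset.sum_ite_eq' (Finset.range (g+1)) g]
      simp [hgne]
    have hcs : (∑ i ∈ Finset.range (g+1), c i * c (g-i))
        = c 0 * c g + (∑ i ∈ Finset.Ico 1 g, c i * c (g-i)) + c g * c 0 := by
      rw [Finset.range_eq_Ico, Finset.sum_eq_sum_Ico_succ_bot (by omega : 0 < g+1),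
        Finset.sum_Ico_succ_top (by omega : 1 ≤ g), Nat.sub_zero, Nat.sub_self]
      ring
    rw [hsum, hcs, hd]
    simp only [U, if_neg hgne, add_zero]
    have hc1g : ((g-1 : ℕ) : ℝ) = (g : ℝ) - 1 := by rw [Nat.cast_sub hg]; norm_num
    have hc1gz : ((g-1 : ℕ) : ℤ) = (g : ℤ) - 1 := by omega
    rw [hc1g, hc1gz,
      show (-(5 * ((g:ℝ) - 1) - 1) / 2) - 2 = -(5*(g:ℝ)-2)/2 by ring]
    have e1 : t2 ^ (3*(g:ℤ)-2) = t2 ^ (3*(g:ℤ)-1) * t2⁻¹ := by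
      rw [← zpow_sub_one₀ ht2]; congr 1; ring
    have e2 : t2 ^ (3*((g:ℤ)-1)-1) = t2 ^ (3*(g:ℤ)-1) * t2⁻¹ * t2⁻¹ * t2⁻¹ := by
      rw [← zpow_sub_one₀ ht2, ← zpow_sub_one₀ ht2, ← zpow_sub_one₀ ht2]; congr 1; ring
    rw [e1, e2, hcrec g hg, hc0]
    field_simp
    ring
end

section
/- Define the sequence (a_n)_{n≥0} by a_0 = −1/2 and, for n ≥ 1, a_n = Σ_{k=1}^{n−1} a_k a_{n−k} + 2(5n−4)(5n−6) a_{n−1}. Then a_n > 0 for all n ≥ 1 (in particular a_1 = 1 and a_2 = 49), and a_n^{1/n} → ∞ as n → ∞; equivalently, 1/a_n^{1/n} → 0. -/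
open Filter

/-- if `a 0 = −1/2` and
`a n = Σ_{k=1}^{n−1} a_k a_{n−k} + 2(5n−4)(5n−6) a_{n−1}` for `n ≥ 1`
(OEIS A094199), then `a n > 0` for all `n ≥ 1` (in particular `a 1 = 1` and
`a 2 = 49`), and `a_n^{1/n} → ∞`; equivalently `1/a_n^{1/n} → 0`. -/
theorem A094199_growth (a : ℕ → ℝ) (h0 : a 0 = -1 / 2)
    (hrec : ∀ n : ℕ, 1 ≤ n →
      a n = (∑ k ∈ Finset.Ico 1 n, a k * a (n - k))
        + 2 * (5 * (n : ℝ) - 4) * (5 * (n : ℝ) - 6) * a (n - 1)) :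
    (∀ n : ℕ, 1 ≤ n → 0 < a n) ∧ a 1 = 1 ∧ a 2 = 49 ∧
    Tendsto (fun n : ℕ => a n ^ ((n : ℝ)⁻¹)) atTop atTop ∧
    Tendsto (fun n : ℕ => (a n ^ ((n : ℝ)⁻¹))⁻¹) atTop (nhds 0) := by
  have h1 : a 1 = 1 := by
    have h := hrec 1 le_rfl
    norm_num [h0] at h
    exact h
  have hpos : ∀ n : ℕ, 1 ≤ n → 0 < a n := by
    intro n
    induction n using Nat.strong_induction_on with
    | _ n ih =>
      intro hn
      rcases eq_or_lt_of_le hn with h | h2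
      · rw [← h, h1]; norm_num
      · rw [hrec n hn]
        have hsum : 0 ≤ ∑ k ∈ Finset.Ico 1 n, a k * a (n - k) := by
          apply Finset.sum_nonneg
          intro k hk
          rw [Finset.mem_Ico] at hk
          exact le_of_lt (mul_pos (ih k hk.2 hk.1)
            (ih (n - k) (by omega) (by omega)))
        have hn2 : (2 : ℝ) ≤ (n : ℝ) := by exact_mod_cast h2
        have hfac : 0 < 2 * (5 * (n : ℝ) - 4) * (5 * (n : ℝ) - 6) := by nlinarith
        have hprev := ih (n - 1) (by omega) (by omega)
        have := mul_pos hfac hprev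
        linarith
  have h2 : a 2 = 49 := by
    have h := hrec 2 (by norm_num)
    have hIco : Finset.Ico 1 2 = {1} := rfl
    rw [hIco] at h
    norm_num [h1] at h
    linarith
  -- key step bound: a n ≥ n² * a (n-1) for n ≥ 2
  have hstep : ∀ n : ℕ, 2 ≤ n → (n : ℝ) ^ 2 * a (n - 1) ≤ a n := by
    intro n hn
    rw [hrec n (by omega)]
    have hsum : 0 ≤ ∑ k ∈ Finset.Ico 1 n, a k * a (n - k) := by
      apply Finset.sum_nonneg
      intro k hk
      rw [Finset.mem_Ico] at hk
      exact le_of_lt (mul_pos (hpos k hk.1) (hpos (n - k) (by omega)))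
    have hn2 : (2 : ℝ) ≤ (n : ℝ) := by exact_mod_cast hn
    have hprev := hpos (n - 1) (by omega)
    have hcoef : (n : ℝ) ^ 2 ≤ 2 * (5 * (n : ℝ) - 4) * (5 * (n : ℝ) - 6) := by
      nlinarith
    nlinarith
  have hge1 : ∀ n : ℕ, 1 ≤ n → 1 ≤ a n := by
    intro n hn
    induction n, hn using Nat.le_induction with
    | base => rw [h1]
    | succ n hn ih =>
      have h := hstep (n + 1) (by omega)
      have hone : (1 : ℝ) ≤ ((n : ℝ) + 1) ^ 2 := by
        have h0n : (0 : ℝ) ≤ (n : ℝ) := Nat.cast_nonneg n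
        have : (1 : ℝ) ≤ (n : ℝ) + 1 := by linarith
        nlinarith
      have : (1 : ℝ) * 1 ≤ ((n : ℝ) + 1) ^ 2 * a n := by
        apply mul_le_mul hone ih (by norm_num) (by positivity)
      simp only [Nat.add_sub_cancel] at h
      push_cast at h
      linarith
  have hgeo : ∀ m : ℕ, 1 ≤ m → ∀ n : ℕ, m ≤ n → (m : ℝ) ^ (2 * (n - m)) ≤ a n := by
    intro m hm n hn
    induction n, hn using Nat.le_induction with
    | base => simpa using hge1 m hm
    | succ n hn ih =>
      have h := hstep (n + 1) (by omega)
      simp only [Nat.add_sub_cancel] at h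
      have hmn : (m : ℝ) ^ 2 ≤ ((n + 1 : ℕ) : ℝ) ^ 2 := by
        have : (m : ℝ) ≤ ((n + 1 : ℕ) : ℝ) := by exact_mod_cast Nat.le_succ_of_le hn
        have hm0 : (0 : ℝ) ≤ m := by positivity
        nlinarith
      have hpow : (m : ℝ) ^ (2 * (n + 1 - m)) = (m : ℝ) ^ 2 * (m : ℝ) ^ (2 * (n - m)) := by
        rw [← pow_add]
        congr 1
        omega
      rw [hpow]
      calc (m : ℝ) ^ 2 * (m : ℝ) ^ (2 * (n - m))
          ≤ ((n + 1 : ℕ) : ℝ) ^ 2 * a n := by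
            apply mul_le_mul hmn ih (by positivity) (by positivity)
        _ ≤ a (n + 1) := by push_cast at h ⊢; linarith
  have htop : Tendsto (fun n : ℕ => a n ^ ((n : ℝ)⁻¹)) atTop atTop := by
    rw [tendsto_atTop]
    intro C
    set m : ℕ := max 2 ⌈C⌉₊ with hm
    have hm2 : 2 ≤ m := le_max_left _ _
    refine Filter.eventually_atTop.2 ⟨2 * m, ?_⟩
    intro n hn
    have hn1 : 1 ≤ n := by omega
    have hmn : m ≤ n := by omega
    have hexp : n ≤ 2 * (n - m) := by omega
    have hmR : (1 : ℝ) ≤ (m : ℝ) := by exact_mod_cast (by omega : 1 ≤ m)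
    have h1' : (m : ℝ) ^ n ≤ (m : ℝ) ^ (2 * (n - m)) :=
      pow_le_pow_right₀ hmR hexp
    have h2' : (m : ℝ) ^ n ≤ a n := le_trans h1' (hgeo m (by omega) n hmn)
    have hnR : (0 : ℝ) < (n : ℝ) := by exact_mod_cast hn1
    have hrpow : ((m : ℝ) ^ n) ^ ((n : ℝ)⁻¹) = (m : ℝ) := by
      rw [← Real.rpow_natCast (m : ℝ) n, ← Real.rpow_mul (by positivity),
        mul_inv_cancel₀ (ne_of_gt hnR), Real.rpow_one]
    have hmono : ((m : ℝ) ^ n) ^ ((n : ℝ)⁻¹) ≤ a n ^ ((n : ℝ)⁻¹) :=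
      Real.rpow_le_rpow (by positivity) h2' (by positivity)
    have hCm : C ≤ (m : ℝ) := by
      calc C ≤ (⌈C⌉₊ : ℝ) := Nat.le_ceil C
        _ ≤ (m : ℝ) := by exact_mod_cast le_max_right 2 ⌈C⌉₊
    rw [hrpow] at hmono
    linarith
  exact ⟨hpos, h1, h2, htop, htop.inv_tendsto_atTop⟩
end
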